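/- The function W(x,y) = (e^y - 1)²/(e^{y/2}√(e^{2y}-1)) on ℝ × (0,∞), being independent of x, satisfies W_{xx} + W_{yy} - P(y)W = 0, vanishes as y → 0+, and is an eigenfunction with eigenvalue 1 of the Laplacian Δ = P(y)^{-1}(∂_x² + ∂_y²) of the metric ds² = P(y)(dx²+dy²), i.e. ΔW = W. -/

import Mathlib

open Real Filter

noncomputable def P (y : ℝ) : ℝ :=
  (Real.exp (4*y) + 10 * Real.exp (2*y) + 1) / (4 * (Real.exp (2*y) - 1)^2)

noncomputable def W (x y : ℝ) : ℝ :=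
  (Real.exp y - 1)^2 / (Real.exp (y/2) * Real.sqrt (Real.exp (2*y) - 1))

noncomputable def W1 (y : ℝ) : ℝ :=
  ((Real.exp y)^2 + 4*Real.exp y + 1) * Real.sqrt (Real.exp (2*y) - 1) /
    (2 * Real.exp (y/2) * (Real.exp y + 1)^2)

lemma exp2y (y : ℝ) : Real.exp (2*y) = Real.exp y * Real.exp y := by
  rw [two_mul, Real.exp_add]

lemma expy (y : ℝ) : Real.exp (y/2) * Real.exp (y/2) = Real.exp y := by
  rw [← Real.exp_add]; norm_num

lemma h1pos {y : ℝ} (hy : 0 < y) : 0 < Real.exp (2*y) - 1 := by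
  nlinarith [Real.add_one_lt_exp (show 2*y ≠ 0 by positivity)]

lemma hasDerivAt_W' {y : ℝ} (hy : 0 < y) :
    HasDerivAt (fun y' => (Real.exp y' - 1)^2 /
      (Real.exp (y'/2) * Real.sqrt (Real.exp (2*y') - 1))) (W1 y) y := by
  have h1 : (0:ℝ) < Real.exp (2*y) - 1 := h1pos hy
  have hQ : 0 < Real.sqrt (Real.exp (2*y) - 1) := Real.sqrt_pos.mpr h1
  have hQ2 : Real.sqrt (Real.exp (2*y) - 1) ^ 2 = Real.exp (2*y) - 1 := Real.sq_sqrt h1.le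
  have hN : HasDerivAt (fun y' => (Real.exp y' - 1)^2)
      ((2:ℕ) * (Real.exp y - 1) ^ 1 * Real.exp y) y :=
    ((Real.hasDerivAt_exp y).sub_const 1).pow 2
  have hb : HasDerivAt (fun y' => Real.exp (y'/2)) (Real.exp (y/2) * (1/2)) y := by
    simpa using ((hasDerivAt_id y).div_const 2).exp
  have hE : HasDerivAt (fun y' => Real.exp (2*y') - 1) (Real.exp (2*y) * 2) y := by
    simpa [mul_comm] using (((hasDerivAt_id y).const_mul 2).exp).sub_const 1
  have hQd : HasDerivAt (fun y' => Real.sqrt (Real.exp (2*y') - 1))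
      (Real.exp (2*y) * 2 / (2 * Real.sqrt (Real.exp (2*y) - 1))) y := hE.sqrt h1.ne'
  have hD := hb.mul hQd
  have hf := hN.div hD (mul_ne_zero (Real.exp_ne_zero _) hQ.ne')
  simp only [Pi.div_def, Pi.mul_def] at hf
  refine hf.congr_deriv (Eq.symm ?_)
  rw [W1]
  rw [exp2y] at hQ2 hQ ⊢
  have hb2 : Real.exp (y/2) * Real.exp (y/2) = Real.exp y := expy y
  set a := Real.exp y
  set b := Real.exp (y/2)
  set Q := Real.sqrt (a * a - 1)
  have hQ0 : Q ≠ 0 := hQ.ne'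
  have hb0 : b ≠ 0 := by positivity
  have ha1 : 0 < a + 1 := by positivity
  field_simp
  linear_combination ((a^2+4*a+1)*Q^2 + (a^2+4*a+1)*(a^2-1) - (a+1)^2*(a-1)*(3*a+1)) * hQ2

lemma hasDerivAt_W1 {y : ℝ} (hy : 0 < y) :
    HasDerivAt W1 (P y * W 0 y) y := by
  have h1 : (0:ℝ) < Real.exp (2*y) - 1 := h1pos hy
  have hQ : 0 < Real.sqrt (Real.exp (2*y) - 1) := Real.sqrt_pos.mpr h1
  have hQ2 : Real.sqrt (Real.exp (2*y) - 1) ^ 2 = Real.exp (2*y) - 1 := Real.sq_sqrt h1.le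
  have hb : HasDerivAt (fun y' => Real.exp (y'/2)) (Real.exp (y/2) * (1/2)) y := by
    simpa using ((hasDerivAt_id y).div_const 2).exp
  have hE : HasDerivAt (fun y' => Real.exp (2*y') - 1) (Real.exp (2*y) * 2) y := by
    simpa [mul_comm] using (((hasDerivAt_id y).const_mul 2).exp).sub_const 1
  have hQd : HasDerivAt (fun y' => Real.sqrt (Real.exp (2*y') - 1))
      (Real.exp (2*y) * 2 / (2 * Real.sqrt (Real.exp (2*y) - 1))) y := hE.sqrt h1.ne'
  have hpoly : HasDerivAt (fun y' => (Real.exp y')^2 + 4*Real.exp y' + 1)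
      ((2:ℕ) * (Real.exp y)^1 * Real.exp y + 4 * Real.exp y) y :=
    ((((Real.hasDerivAt_exp y).pow 2).add ((Real.hasDerivAt_exp y).const_mul 4))).add_const 1
  have hN2 := hpoly.mul hQd
  have hD2 : HasDerivAt (fun y' => 2 * Real.exp (y'/2) * (Real.exp y' + 1)^2)
      ((2 * (Real.exp (y/2) * (1/2))) * (Real.exp y + 1)^2 +
        (2 * Real.exp (y/2)) * ((2:ℕ) * (Real.exp y + 1)^1 * Real.exp y)) y :=
    (hb.const_mul 2).mul (((Real.hasDerivAt_exp y).add_const 1).pow 2)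
  have hD2ne : (2 * Real.exp (y/2) * (Real.exp y + 1)^2) ≠ 0 := by positivity
  have hf := hN2.div hD2 hD2ne
  simp only [Pi.div_def, Pi.mul_def] at hf
  refine hf.congr_deriv (Eq.symm ?_)
  rw [P, W]
  rw [show (4:ℝ)*y = 2*y + 2*y by ring, Real.exp_add]
  rw [exp2y] at hQ2 hQ ⊢
  have hb2 : Real.exp (y/2) * Real.exp (y/2) = Real.exp y := expy y
  set a := Real.exp y
  set b := Real.exp (y/2)
  set Q := Real.sqrt (a * a - 1)
  have hQ0 : Q ≠ 0 := hQ.ne'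
  have hb0 : b ≠ 0 := Real.exp_ne_zero _
  have ha : (0:ℝ) < a := Real.exp_pos y
  have haa : a * a - 1 ≠ 0 := by nlinarith [hQ2, hQ]
  have ha1 : a + 1 ≠ 0 := by positivity
  have haa2 : a ^ 2 - 1 ≠ 0 := by rw [sq]; exact haa
  field_simp
  linear_combination (-4*(a^2-1)^2*(2*a*(a+1)*(2*a+4) - (a^2+4*a+1)*(5*a+1))) * hQ2

lemma key_deriv (x y : ℝ) (hy : 0 < y) :
    deriv (deriv (fun y' => W x y')) y = P y * W x y := by
  have hW : ∀ z ∈ Set.Ioi (0:ℝ), HasDerivAt (fun y' => W x y') (W1 z) z := by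
    intro z hz
    exact hasDerivAt_W' hz
  have hderiv : deriv (fun y' => W x y') =ᶠ[nhds y] W1 := by
    filter_upwards [Ioi_mem_nhds hy] with z hz using (hW z hz).deriv
  rw [hderiv.deriv_eq, (hasDerivAt_W1 hy).deriv]
  rfl

lemma xderiv (x y : ℝ) : deriv (deriv (fun x' => W x' y)) x = 0 := by
  have h : (fun x' : ℝ => W x' y) = fun _ => W 0 y := rfl
  rw [h, deriv_const']
  simp

lemma Ppos (y : ℝ) (hy : 0 < y) : 0 < P y := by
  have h1 : (0:ℝ) < Real.exp (2*y) - 1 := h1pos hy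
  rw [P]
  apply div_pos (by positivity)
  nlinarith

lemma Wtend (x : ℝ) : Tendsto (fun y => W x y) (nhdsWithin 0 (Set.Ioi 0)) (nhds 0) := by
  have hg : Tendsto (fun y : ℝ => Real.sqrt (Real.exp y - 1) ^ 3)
      (nhdsWithin 0 (Set.Ioi 0)) (nhds 0) := by
    have hc : Continuous fun y : ℝ => Real.sqrt (Real.exp y - 1) ^ 3 := by
      exact (Real.continuous_sqrt.comp (Real.continuous_exp.sub continuous_const)).pow 3
    have h0 := (hc.tendsto 0).mono_left (nhdsWithin_le_nhds (s := Set.Ioi 0))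
    simpa using h0
  apply squeeze_zero' ?_ ?_ hg
  · filter_upwards [self_mem_nhdsWithin] with y hy
    rw [W]
    positivity
  · filter_upwards [self_mem_nhdsWithin] with y hy
    rw [Set.mem_Ioi] at hy
    have ha1 : (1:ℝ) ≤ Real.exp y := by nlinarith [Real.add_one_le_exp y]
    have h1 : (0:ℝ) < Real.exp (2*y) - 1 := h1pos hy
    set s := Real.sqrt (Real.exp y - 1) with hs
    have hs2 : s^2 = Real.exp y - 1 := Real.sq_sqrt (by linarith)
    have hspos : 0 < s := Real.sqrt_pos.mpr (by nlinarith [Real.add_one_lt_exp hy.ne'])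
    have hD : s ≤ Real.exp (y/2) * Real.sqrt (Real.exp (2*y) - 1) := by
      have h1b : (1:ℝ) ≤ Real.exp (y/2) := Real.one_le_exp (by positivity)
      have hQs : s ≤ Real.sqrt (Real.exp (2*y) - 1) := by
        apply Real.sqrt_le_sqrt
        rw [exp2y]
        nlinarith
      calc s ≤ Real.sqrt (Real.exp (2*y) - 1) := hQs
        _ = 1 * Real.sqrt (Real.exp (2*y) - 1) := (one_mul _).symm
        _ ≤ Real.exp (y/2) * Real.sqrt (Real.exp (2*y) - 1) := by
            apply mul_le_mul_of_nonneg_right h1b (Real.sqrt_nonneg _)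
    rw [W]
    calc (Real.exp y - 1)^2 / (Real.exp (y/2) * Real.sqrt (Real.exp (2*y) - 1))
        ≤ (Real.exp y - 1)^2 / s := by
          apply div_le_div_of_nonneg_left (by positivity) hspos hD
      _ = s ^ 3 := by rw [← hs2]; field_simp

theorem stmt_6 :
    (∀ x y : ℝ, 0 < y →
      deriv (deriv (fun x' => W x' y)) x + deriv (deriv (fun y' => W x y')) y
        - P y * W x y = 0) ∧
    (∀ x : ℝ, Tendsto (fun y => W x y) (nhdsWithin 0 (Set.Ioi 0)) (nhds 0)) ∧
    (∀ x y : ℝ, 0 < y →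
      (P y)⁻¹ * (deriv (deriv (fun x' => W x' y)) x +
        deriv (deriv (fun y' => W x y')) y) = W x y) := by
  refine ⟨fun x y hy => ?_, Wtend, fun x y hy => ?_⟩
  · rw [xderiv, key_deriv x y hy]; ring
  · rw [xderiv, key_deriv x y hy, zero_add, ← mul_assoc,
      inv_mul_cancel₀ (Ppos y hy).ne', one_mul]
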